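/- Let 0 < k ≤ K and ν ∈ [0,1]. For all x ∈ [k,K]: exp((1/2)·ν·(1−ν)·(1 − min(1,K)/max(1,k))²)·x^ν ≤ 1 − ν + ν·x ≤ exp((1/2)·ν·(1−ν)·(max(1,K)/min(1,k) − 1)²)·x^ν. -/

import Mathlib

open Real Set

lemma aux_deriv (a : ℝ) (ha : 0 < a) {x : ℝ} (hx : 0 < x) :
    HasDerivAt (fun y : ℝ => Real.log y + y^2/(2*a^2)) (x⁻¹ + x/a^2) x := by
  have h1 := (Real.hasDerivAt_log hx.ne').add ((hasDerivAt_pow 2 x).div_const (2*a^2))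
  refine h1.congr_deriv ?_
  field_simp
  ring

lemma aux_deriv2 (a : ℝ) (ha : 0 < a) {x : ℝ} (hx : 0 < x) :
    HasDerivAt (fun y : ℝ => y⁻¹ + y/a^2) (-(x^2)⁻¹ + 1/a^2) x := by
  have h1 := (hasDerivAt_inv hx.ne').add ((hasDerivAt_id x).div_const (a^2))
  exact h1

lemma key_convex (a : ℝ) (ha : 0 < a) :
    ConvexOn ℝ (Set.Ici a) (fun x : ℝ => Real.log x + x^2/(2*a^2)) := by
  apply convexOn_of_hasDerivWithinAt2_nonneg (convex_Ici a)
    (f' := fun y => y⁻¹ + y/a^2) (f'' := fun y => -(y^2)⁻¹ + 1/a^2)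
  · apply ContinuousOn.add
    · exact Real.continuousOn_log.mono (by intro y hy; simp at hy ⊢; intro h; rw [h] at hy; linarith)
    · fun_prop
  · intro y hy
    rw [interior_Ici] at hy
    exact (aux_deriv a ha (ha.trans hy)).hasDerivWithinAt
  · intro y hy
    rw [interior_Ici] at hy
    exact (aux_deriv2 a ha (ha.trans hy)).hasDerivWithinAt
  · intro y hy
    rw [interior_Ici] at hy
    have hay : a < y := hy
    have hy0 : 0 < y := ha.trans hay
    have : a^2 ≤ y^2 := by nlinarith
    have h1 : (y^2)⁻¹ ≤ (a^2)⁻¹ := by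
      apply inv_anti₀ (by positivity) this
    simp only [one_div]
    linarith

lemma key_concave (b : ℝ) (hb : 0 < b) :
    ConcaveOn ℝ (Set.Ioc 0 b) (fun x : ℝ => Real.log x + x^2/(2*b^2)) := by
  apply concaveOn_of_hasDerivWithinAt2_nonpos (convex_Ioc 0 b)
    (f' := fun y => y⁻¹ + y/b^2) (f'' := fun y => -(y^2)⁻¹ + 1/b^2)
  · apply ContinuousOn.add
    · exact Real.continuousOn_log.mono (by intro y hy; simp at hy ⊢; intro h; rw [h] at hy; exact absurd hy.1 (lt_irrefl 0))
    · fun_prop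
  · intro y hy
    rw [interior_Ioc] at hy
    exact (aux_deriv b hb hy.1).hasDerivWithinAt
  · intro y hy
    rw [interior_Ioc] at hy
    exact (aux_deriv2 b hb hy.1).hasDerivWithinAt
  · intro y hy
    rw [interior_Ioc] at hy
    have : y^2 ≤ b^2 := by nlinarith [hy.1, hy.2]
    have h1 : (b^2)⁻¹ ≤ (y^2)⁻¹ := by
      apply inv_anti₀ (pow_pos hy.1 2) this
    simp only [one_div]
    linarith

lemma h_upper (t ν a : ℝ) (ht : 0 < t) (hν0 : 0 ≤ ν) (hν1 : ν ≤ 1)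
    (ha : 0 < a) (ha1 : a ≤ 1) (hat : a ≤ t) :
    Real.log (1 - ν + ν*t) - ν * Real.log t ≤ ν*(1-ν)*(t-1)^2/(2*a^2) := by
  have h := (key_convex a ha).2 (Set.mem_Ici.2 ha1) (Set.mem_Ici.2 hat)
    (by linarith : (0:ℝ) ≤ 1 - ν) hν0 (by ring)
  simp only [smul_eq_mul, Real.log_one] at h
  have hcomb : (1-ν)*1 + ν*t = 1 - ν + ν*t := by ring
  rw [hcomb] at h
  have ha2 : 0 < a^2 := by positivity
  have key : (1 - ν) * (0 + 1^2/(2*a^2)) + ν * (Real.log t + t^2/(2*a^2))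
      - ((1-ν+ν*t)^2/(2*a^2)) = ν * Real.log t + ν*(1-ν)*(t-1)^2/(2*a^2) := by
    field_simp
    ring
  linarith [h, key]

lemma h_lower (t ν b : ℝ) (ht : 0 < t) (hν0 : 0 ≤ ν) (hν1 : ν ≤ 1)
    (hb1 : 1 ≤ b) (hbt : t ≤ b) :
    ν*(1-ν)*(t-1)^2/(2*b^2) ≤ Real.log (1 - ν + ν*t) - ν * Real.log t := by
  have hb : 0 < b := lt_of_lt_of_le one_pos hb1
  have h := (key_concave b hb).2 (Set.mem_Ioc.2 ⟨one_pos, hb1⟩) (Set.mem_Ioc.2 ⟨ht, hbt⟩)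
    (by linarith : (0:ℝ) ≤ 1 - ν) hν0 (by ring)
  simp only [smul_eq_mul, Real.log_one] at h
  have hcomb : (1-ν)*1 + ν*t = 1 - ν + ν*t := by ring
  rw [hcomb] at h
  have hb2 : 0 < b^2 := by positivity
  have key : (1 - ν) * (0 + 1^2/(2*b^2)) + ν * (Real.log t + t^2/(2*b^2))
      - ((1-ν+ν*t)^2/(2*b^2)) = ν * Real.log t + ν*(1-ν)*(t-1)^2/(2*b^2) := by
    field_simp
    ring
  linarith [h, key]

theorem stmt_11 (k K : ℝ) (hk : 0 < k) (hkK : k ≤ K) (ν : ℝ) (hν : ν ∈ Set.Icc (0:ℝ) 1)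
    (x : ℝ) (hx : x ∈ Set.Icc k K) :
    Real.exp (1/2 * ν * (1 - ν) * (1 - min 1 K / max 1 k)^2) * x ^ ν ≤ 1 - ν + ν * x ∧
    1 - ν + ν * x ≤ Real.exp (1/2 * ν * (1 - ν) * (max 1 K / min 1 k - 1)^2) * x ^ ν := by
  obtain ⟨hν0, hν1⟩ := hν
  obtain ⟨hkx, hxK⟩ := hx
  have hx0 : 0 < x := lt_of_lt_of_le hk hkx
  set m := min 1 x with hm_def
  set M := max 1 x with hM_def
  have hm0 : 0 < m := lt_min one_pos hx0
  have hM1 : 1 ≤ M := le_max_left 1 x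
  have hm1 : m ≤ 1 := min_le_left 1 x
  have hmx : m ≤ x := min_le_right 1 x
  have hxM : x ≤ M := le_max_right 1 x
  have hM0 : 0 < M := lt_of_lt_of_le one_pos hM1
  have hMm : (M - m)^2 = (x - 1)^2 := by
    rcases le_total 1 x with h | h
    · rw [hm_def, hM_def, min_eq_left h, max_eq_right h]
    · rw [hm_def, hM_def, min_eq_right h, max_eq_left h]; ring
  -- positivity of combination
  have hc : 0 < 1 - ν + ν * x := by
    nlinarith [mul_nonneg (by linarith : (0:ℝ) ≤ 1 - ν) (by linarith : (0:ℝ) ≤ 1 - m),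
      mul_nonneg hν0 (by linarith : (0:ℝ) ≤ x - m)]
  have hmk0 : 0 < max 1 k := lt_of_lt_of_le one_pos (le_max_left 1 k)
  have hmK0 : 0 < min 1 K := lt_min one_pos (lt_of_lt_of_le hk hkK)
  have hxν : x ^ ν = Real.exp (ν * Real.log x) := by
    rw [Real.rpow_def_of_pos hx0, mul_comm]
  constructor
  · -- lower bound
    have hlow := h_lower x ν M hx0 hν0 hν1 hM1 hxM
    have hr0 : 0 ≤ 1 - min 1 K / max 1 k := by
      rw [sub_nonneg]
      exact div_le_one_of_le₀ (le_trans (min_le_left 1 K) (le_max_left 1 k)) (le_of_lt hmk0)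
    have hr1 : 1 - min 1 K / max 1 k ≤ (M - m)/M := by
      have h1 : m / M ≤ min 1 K / max 1 k := by
        apply div_le_div₀ (le_of_lt hmK0) (min_le_min le_rfl hxK) hmk0 (max_le_max le_rfl hkx)
      have h2 : (M - m)/M = 1 - m/M := by field_simp
      rw [h2]; linarith
    have hr2 : (1 - min 1 K / max 1 k)^2 ≤ (x-1)^2/M^2 := by
      have := mul_self_le_mul_self hr0 hr1
      calc (1 - min 1 K / max 1 k)^2 ≤ ((M-m)/M)^2 := by
            rw [pow_two, pow_two]; exact this
        _ = (x-1)^2/M^2 := by rw [div_pow, hMm]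
    have harg : 1/2 * ν * (1 - ν) * (1 - min 1 K / max 1 k)^2 ≤ ν*(1-ν)*(x-1)^2/(2*M^2) := by
      have hνν : 0 ≤ ν * (1 - ν) := mul_nonneg hν0 (by linarith)
      have : ν*(1-ν)*(x-1)^2/(2*M^2) = 1/2 * ν * (1-ν) * ((x-1)^2/M^2) := by ring
      rw [this]
      apply mul_le_mul_of_nonneg_left hr2
      nlinarith
    rw [hxν, ← Real.exp_add, ← Real.exp_log hc]
    apply Real.exp_le_exp.2
    have : 1/2 * ν * (1 - ν) * (1 - min 1 K / max 1 k)^2 ≤ Real.log (1 - ν + ν*x) - ν * Real.log x :=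
      le_trans harg hlow
    linarith
  · -- upper bound
    have hup := h_upper x ν m hx0 hν0 hν1 hm0 hm1 hmx
    have hs0 : 0 ≤ M/m - 1 := by
      rw [sub_nonneg, le_div_iff₀ hm0, one_mul]
      linarith
    have hs1 : M/m - 1 ≤ max 1 K / min 1 k - 1 := by
      have h1 : M / m ≤ max 1 K / min 1 k :=
        div_le_div₀ (le_of_lt (lt_of_lt_of_le one_pos (le_max_left 1 K)))
          (max_le_max le_rfl hxK) (lt_min one_pos hk) (min_le_min le_rfl hkx)
      linarith
    have hs2 : (x-1)^2/m^2 ≤ (max 1 K / min 1 k - 1)^2 := by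
      have he : (x-1)^2/m^2 = ((M-m)/m)^2 := by rw [div_pow, hMm]
      rw [he]
      have h3 : (M-m)/m = M/m - 1 := by field_simp
      rw [h3, pow_two, pow_two]
      exact mul_self_le_mul_self hs0 hs1
    have harg : ν*(1-ν)*(x-1)^2/(2*m^2) ≤ 1/2 * ν * (1 - ν) * (max 1 K / min 1 k - 1)^2 := by
      have : ν*(1-ν)*(x-1)^2/(2*m^2) = 1/2 * ν * (1-ν) * ((x-1)^2/m^2) := by ring
      rw [this]
      apply mul_le_mul_of_nonneg_left hs2
      nlinarith
    rw [hxν, ← Real.exp_add, ← Real.exp_log hc]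
    apply Real.exp_le_exp.2
    have : Real.log (1 - ν + ν*x) - ν * Real.log x ≤ 1/2 * ν * (1 - ν) * (max 1 K / min 1 k - 1)^2 :=
      le_trans hup harg
    linarith
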